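/- If n or m is odd and 3 ≤ n ≤ m−2, then every red/blue coloring of K_{n+m} contains a red K_{1,n} or a blue K_{1,m}+e. -/

import Mathlib

open SimpleGraph

/-- `Contains G H` : the graph `G` contains a copy of `H`. -/
def Contains {V W : Type*} (G : SimpleGraph V) (H : SimpleGraph W) : Prop :=
  ∃ f : W → V, Function.Injective f ∧ ∀ a b, H.Adj a b → G.Adj (f a) (f b)

/-- The star `K_{1,n}` on `n+1` vertices: vertex `0` is joined to all others. -/
def starG (n : ℕ) : SimpleGraph (Fin (n + 1)) :=
  SimpleGraph.fromRel (fun a _ => a = 0)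

/-- `K_{1,m}+e` on `m+1` vertices: vertex `0` joined to all others, plus the edge `{1,2}`. -/
def starPlusE (m : ℕ) : SimpleGraph (Fin (m + 1)) :=
  SimpleGraph.fromRel (fun a b => a = 0 ∨ (a = 1 ∧ b = 2))

lemma contains_star_of_degree {V : Type*} [Fintype V] [DecidableEq V]
    (G : SimpleGraph V) [DecidableRel G.Adj] (n : ℕ) (v : V) (h : n ≤ G.degree v) :
    Contains G (starG n) := by
  obtain ⟨S, hS, hcard⟩ := Finset.exists_subset_card_eq h
  have e := S.equivFinOfCardEq hcard
  have hSv : ∀ x ∈ S, G.Adj v x := fun x hx =>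
    (G.mem_neighborFinset v x).mp (hS hx)
  refine ⟨fun i => if h : i = 0 then v else (e.symm (i.pred h) : V), ?_, ?_⟩
  · intro i j hij
    by_cases hi : i = 0 <;> by_cases hj : j = 0 <;> simp [hi, hj] at hij ⊢
    · exact absurd hij (G.ne_of_adj (hSv _ (e.symm (j.pred hj)).2))
    · exact absurd hij.symm (G.ne_of_adj (hSv _ (e.symm (i.pred hi)).2))
    · exact hij
  · intro a b hab
    rw [starG, SimpleGraph.fromRel_adj] at hab
    obtain ⟨hne, h0⟩ := hab
    rcases h0 with h0 | h0
    · have hb : b ≠ 0 := by rw [h0] at hne; exact hne.symm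
      simp only [h0, hb, dif_pos rfl, dif_neg]
      exact hSv _ (e.symm (b.pred hb)).2
    · have ha : a ≠ 0 := by rw [h0] at hne; exact hne
      simp only [h0, ha, dif_pos rfl, dif_neg]
      exact (hSv _ (e.symm (a.pred ha)).2).symm

lemma contains_starPlusE_of {V : Type*} [Fintype V] [DecidableEq V]
    (G : SimpleGraph V) [DecidableRel G.Adj] (m : ℕ) (hm : 2 ≤ m) (v u w : V)
    (hvu : G.Adj v u) (hvw : G.Adj v w) (huw : G.Adj u w)
    (hdeg : m ≤ G.degree v) : Contains G (starPlusE m) := by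
  have hneuw : u ≠ w := G.ne_of_adj huw
  have hsub : ({u, w} : Finset V) ⊆ G.neighborFinset v := by
    intro x hx
    rw [SimpleGraph.mem_neighborFinset]
    rcases Finset.mem_insert.mp hx with rfl | hx
    · exact hvu
    · rw [Finset.mem_singleton] at hx; subst hx; exact hvw
  have hcard : m - 2 ≤ ((G.neighborFinset v) \ {u, w}).card := by
    rw [Finset.card_sdiff_of_subset hsub, Finset.card_pair hneuw]
    have : G.degree v = (G.neighborFinset v).card := rfl
    omega
  obtain ⟨T, hT, hTcard⟩ := Finset.exists_subset_card_eq hcard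
  have e := T.equivFinOfCardEq hTcard
  have hTfact : ∀ x ∈ T, G.Adj v x ∧ x ≠ u ∧ x ≠ w := by
    intro x hx
    have := hT hx
    simp only [Finset.mem_sdiff, SimpleGraph.mem_neighborFinset, Finset.mem_insert,
      Finset.mem_singleton] at this
    exact ⟨this.1, fun h => this.2 (Or.inl h), fun h => this.2 (Or.inr h)⟩
  set f : Fin (m + 1) → V := fun i =>
    if h : 3 ≤ (i : ℕ) then (e.symm ⟨(i : ℕ) - 3, by omega⟩ : V)
    else if (i : ℕ) = 0 then v else if (i : ℕ) = 1 then u else w with hf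
  have hval0 : ((0 : Fin (m+1)) : ℕ) = 0 := rfl
  have hval1 : ((1 : Fin (m+1)) : ℕ) = 1 := by
    simp [Fin.val_one']; omega
  have hval2 : ((2 : Fin (m+1)) : ℕ) = 2 := by
    have : ((2 : Fin (m+1)) : ℕ) = 2 % (m + 1) := rfl
    rw [this, Nat.mod_eq_of_lt (by omega)]
  have hfv : ∀ i : Fin (m+1), (i : ℕ) = 0 → f i = v := by
    intro i hi
    have h3 : ¬ 3 ≤ (i : ℕ) := by omega
    simp only [hf, dif_neg h3, hi]; norm_num
  have hfu : ∀ i : Fin (m+1), (i : ℕ) = 1 → f i = u := by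
    intro i hi
    have h3 : ¬ 3 ≤ (i : ℕ) := by omega
    simp only [hf, dif_neg h3, hi]; norm_num
  have hfw : ∀ i : Fin (m+1), (i : ℕ) = 2 → f i = w := by
    intro i hi
    have h3 : ¬ 3 ≤ (i : ℕ) := by omega
    simp only [hf, dif_neg h3, hi]; norm_num
  have hfT : ∀ i : Fin (m+1), 3 ≤ (i : ℕ) → f i ∈ T := by
    intro i hi; simp only [hf, dif_pos hi]; exact (e.symm _).2
  refine ⟨f, ?_, ?_⟩
  · intro i j hij
    have hvne : v ≠ u := G.ne_of_adj hvu
    have hvnw : v ≠ w := G.ne_of_adj hvw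
    by_cases hi : 3 ≤ (i : ℕ) <;> by_cases hj : 3 ≤ (j : ℕ)
    · simp only [hf, dif_pos hi, dif_pos hj] at hij
      have := e.symm.injective (Subtype.val_injective hij)
      have := Fin.val_eq_of_eq this
      simp only [Fin.val_mk] at this
      exact Fin.ext (by omega)
    · exfalso
      obtain ⟨h1, h2, h3⟩ := hTfact _ (hfT i hi)
      have hjvals : f j = v ∨ f j = u ∨ f j = w := by
        simp only [hf, dif_neg hj]
        split_ifs <;> tauto
      rcases hjvals with h | h | h
      · exact G.ne_of_adj h1 (hij.trans h).symm
      · exact h2 (hij.trans h)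
      · exact h3 (hij.trans h)
    · exfalso
      obtain ⟨h1, h2, h3⟩ := hTfact _ (hfT j hj)
      have hivals : f i = v ∨ f i = u ∨ f i = w := by
        simp only [hf, dif_neg hi]
        split_ifs <;> tauto
      rcases hivals with h | h | h
      · exact G.ne_of_adj h1 (hij.symm.trans h).symm
      · exact h2 (hij.symm.trans h)
      · exact h3 (hij.symm.trans h)
    · simp only [hf, dif_neg hi, dif_neg hj] at hij
      split_ifs at hij with h1 h2 h3 h4 h5 h6 h7 h8 <;>
        first
        | (exact Fin.ext (by omega))
        | (exact absurd hij hvne)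
        | (exact absurd hij.symm hvne)
        | (exact absurd hij hvnw)
        | (exact absurd hij.symm hvnw)
        | (exact absurd hij hneuw)
        | (exact absurd hij.symm hneuw)
  · have hadjv : ∀ i : Fin (m+1), (i : ℕ) ≠ 0 → G.Adj v (f i) := by
      intro i hi
      by_cases h3 : 3 ≤ (i : ℕ)
      · exact (hTfact _ (hfT i h3)).1
      · simp only [hf, dif_neg h3]
        split_ifs with h1 h2
        · exact absurd h1 hi
        · exact hvu
        · exact hvw
    intro a b hab
    rw [starPlusE, SimpleGraph.fromRel_adj] at hab
    obtain ⟨hne, h0⟩ := hab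
    have hvalne : (a : ℕ) ≠ (b : ℕ) := fun h => hne (Fin.ext h)
    rcases h0 with (h | ⟨h1, h2⟩) | (h | ⟨h1, h2⟩)
    · rw [hfv a (by rw [h]; rfl)]
      exact hadjv b (by rw [h] at hvalne; exact fun hb => hvalne hb.symm)
    · rw [hfu a (by rw [h1]; exact hval1), hfw b (by rw [h2]; exact hval2)]
      exact huw
    · rw [hfv b (by rw [h]; rfl)]
      exact (hadjv a (by rw [h] at hvalne; exact hvalne)).symm
    · rw [hfu b (by rw [h1]; exact hval1), hfw a (by rw [h2]; exact hval2)]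
      exact huw.symm

theorem stmt_4 (n m : ℕ) (hodd : Odd n ∨ Odd m) (hn : 3 ≤ n) (hnm : n + 2 ≤ m)
    (R : SimpleGraph (Fin (n + m))) :
    Contains R (starG n) ∨ Contains Rᶜ (starPlusE m) := by
  classical
  by_contra hcon
  push_neg at hcon
  obtain ⟨hRed, hBlue⟩ := hcon
  have hdegR : ∀ v, R.degree v < n := by
    intro v
    by_contra h
    push_neg at h
    exact hRed (contains_star_of_degree R n v h)
  have hdegB : ∀ v, m ≤ Rᶜ.degree v := by
    intro v
    have h1 : Rᶜ.degree v = Fintype.card (Fin (n + m)) - 1 - R.degree v := R.degree_compl v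
    have h2 : Fintype.card (Fin (n + m)) = n + m := Fintype.card_fin _
    have := hdegR v
    omega
  have hnotri : ∀ v u w : Fin (n + m),
      Rᶜ.Adj v u → Rᶜ.Adj v w → Rᶜ.Adj u w → False := by
    intro v u w h1 h2 h3
    exact hBlue (contains_starPlusE_of Rᶜ m (by omega) v u w h1 h2 h3 (hdegB v))
  have hNpos : 0 < n + m := by omega
  set v0 : Fin (n + m) := ⟨0, hNpos⟩
  have hdp : 0 < Rᶜ.degree v0 := lt_of_lt_of_le (by omega) (hdegB v0)
  obtain ⟨u, hu⟩ := (Rᶜ.degree_pos_iff_exists_adj v0).mp hdp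
  have hdisj : Disjoint (Rᶜ.neighborFinset v0) (Rᶜ.neighborFinset u) := by
    rw [Finset.disjoint_left]
    intro x hx hx'
    exact hnotri v0 u x hu ((Rᶜ.mem_neighborFinset v0 x).mp hx)
      ((Rᶜ.mem_neighborFinset u x).mp hx')
  have hcard : (Rᶜ.neighborFinset v0 ∪ Rᶜ.neighborFinset u).card
      = Rᶜ.degree v0 + Rᶜ.degree u := Finset.card_union_of_disjoint hdisj
  have hle : (Rᶜ.neighborFinset v0 ∪ Rᶜ.neighborFinset u).card ≤ n + m := by
    have := Finset.card_le_univ (Rᶜ.neighborFinset v0 ∪ Rᶜ.neighborFinset u)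
    simpa using this
  have := hdegB v0
  have := hdegB u
  omega
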